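/- Let 0 ≤ θ ≤ 1/2, q > −1 and η > 0. Then there exist a constant C > 0 (depending on η, θ, q) and T > 0 such that ∫₀^η (1 + r^(2−2θ))^(−t) r^q dr ≥ C t^(−(q+1)/(2(1−θ))) for all t ≥ T. -/

import Mathlib

theorem lower_bound_small_eta (θ q η : ℝ) (hθ : 0 ≤ θ) (hθ' : θ ≤ 1/2) (hq : -1 < q)
    (hη : 0 < η) :
    ∃ C T : ℝ, 0 < C ∧ 0 < T ∧
      ∀ t : ℝ, T ≤ t →
        C * t ^ (-(q+1)/(2*(1-θ))) ≤ ∫ r in (0:ℝ)..η, (1 + r ^ (2 - 2*θ)) ^ (-t) * r ^ q := by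
  have hθ2 : (0:ℝ) < 2 - 2*θ := by linarith
  have hq1 : (0:ℝ) < q + 1 := by linarith
  refine ⟨Real.exp (-1) / (q+1), max 1 (η ^ (-(2-2*θ))), by positivity,
    lt_of_lt_of_le one_pos (le_max_left _ _), ?_⟩
  intro t ht
  have ht1 : (1:ℝ) ≤ t := le_trans (le_max_left _ _) ht
  have ht0 : (0:ℝ) < t := lt_of_lt_of_le one_pos ht1
  set a : ℝ := t ^ (-(1/(2-2*θ))) with ha
  have ha0 : 0 < a := Real.rpow_pos_of_pos ht0 _
  have haη : a ≤ η := by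
    have h1 : a ≤ (η ^ (-(2-2*θ))) ^ (-(1/(2-2*θ))) :=
      Real.rpow_le_rpow_of_nonpos (Real.rpow_pos_of_pos hη _)
        (le_trans (le_max_right _ _) ht) (neg_nonpos.mpr (by positivity))
    calc a ≤ (η ^ (-(2-2*θ))) ^ (-(1/(2-2*θ))) := h1
      _ = η := by
        rw [← Real.rpow_mul hη.le]
        rw [show (-(2-2*θ)) * (-(1/(2-2*θ))) = 1 by field_simp; exact div_self (by linarith : (0:ℝ) < 1 - θ).ne', Real.rpow_one]
  have haexp : a ^ (2-2*θ) = t⁻¹ := by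
    rw [ha, ← Real.rpow_mul ht0.le]
    rw [show (-(1/(2-2*θ))) * (2-2*θ) = -1 by field_simp; rw [div_self (by linarith : (0:ℝ) < 1 - θ).ne'], Real.rpow_neg_one]
  -- pointwise bound on [0, a]
  have hpt : ∀ x ∈ Set.Icc (0:ℝ) a,
      Real.exp (-1) * x ^ q ≤ (1 + x ^ (2 - 2*θ)) ^ (-t) * x ^ q := by
    intro x hx
    have hx0 : 0 ≤ x := hx.1
    have hxp : (0:ℝ) ≤ x ^ q := Real.rpow_nonneg hx0 _
    refine mul_le_mul_of_nonneg_right ?_ hxp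
    have h1 : x ^ (2-2*θ) ≤ t⁻¹ := by
      rw [← haexp]; exact Real.rpow_le_rpow hx0 hx.2 hθ2.le
    have h2 : 1 + x ^ (2-2*θ) ≤ Real.exp t⁻¹ := by
      have := Real.add_one_le_exp (t⁻¹)
      linarith
    have h3 : (Real.exp t⁻¹) ^ (-t) ≤ (1 + x ^ (2-2*θ)) ^ (-t) := by
      refine Real.rpow_le_rpow_of_nonpos ?_ h2 (by linarith)
      have : (0:ℝ) ≤ x ^ (2-2*θ) := Real.rpow_nonneg hx0 _
      linarith
    have h4 : (Real.exp t⁻¹) ^ (-t) = Real.exp (-1) := by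
      rw [← Real.exp_mul]
      congr 1
      field_simp
    linarith [h3, h4 ▸ h3]
  -- integrability
  have hrq : IntervalIntegrable (fun x => x ^ q) MeasureTheory.volume 0 η :=
    intervalIntegral.intervalIntegrable_rpow' hq
  have hmeas : MeasureTheory.AEStronglyMeasurable
      (fun x : ℝ => (1 + x ^ (2 - 2*θ)) ^ (-t) * x ^ q)
      (MeasureTheory.volume.restrict (Set.uIoc (0:ℝ) η)) := by
    rw [Set.uIoc_of_le hη.le]
    refine ContinuousOn.aestronglyMeasurable ?_ measurableSet_Ioc
    intro x hx
    have hx0 : 0 < x := hx.1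
    have h1 : (0:ℝ) ≤ x ^ (2-2*θ) := Real.rpow_nonneg hx0.le _
    exact (((continuousAt_const.add
      (Real.continuousAt_rpow_const x (2-2*θ) (Or.inl hx0.ne'))).rpow_const
      (Or.inl (by intro h; simp only [Pi.add_apply] at h; linarith))).mul
      (Real.continuousAt_rpow_const x q (Or.inl hx0.ne'))).continuousWithinAt
  have hbound : ∀ x ∈ Set.uIoc (0:ℝ) η,
      ‖(1 + x ^ (2 - 2*θ)) ^ (-t) * x ^ q‖ ≤ ‖x ^ q‖ := by
    intro x hx
    rw [Set.uIoc_of_le hη.le] at hx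
    have hx0 : (0:ℝ) ≤ x := hx.1.le
    have h1 : (0:ℝ) ≤ x ^ (2-2*θ) := Real.rpow_nonneg hx0 _
    have h2 : (1 + x ^ (2-2*θ)) ^ (-t) ≤ 1 :=
      Real.rpow_le_one_of_one_le_of_nonpos (by linarith) (by linarith)
    have h3 : (0:ℝ) ≤ (1 + x ^ (2-2*θ)) ^ (-t) := Real.rpow_nonneg (by linarith) _
    have h4 : (0:ℝ) ≤ x ^ q := Real.rpow_nonneg hx0 _
    rw [Real.norm_eq_abs, Real.norm_eq_abs, abs_of_nonneg (by positivity), abs_of_nonneg h4]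
    nlinarith
  have hf : IntervalIntegrable (fun x : ℝ => (1 + x ^ (2 - 2*θ)) ^ (-t) * x ^ q)
      MeasureTheory.volume 0 η := by
    refine hrq.mono_fun hmeas ?_
    exact (MeasureTheory.ae_restrict_iff' measurableSet_uIoc).mpr
      (Filter.Eventually.of_forall hbound)
  have hf1 : IntervalIntegrable (fun x : ℝ => (1 + x ^ (2 - 2*θ)) ^ (-t) * x ^ q)
      MeasureTheory.volume 0 a :=
    by
    refine hf.mono_set ?_
    rw [Set.uIcc_of_le hη.le, Set.uIcc_of_le ha0.le]
    exact Set.Icc_subset_Icc le_rfl haη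
  have hf2 : IntervalIntegrable (fun x : ℝ => (1 + x ^ (2 - 2*θ)) ^ (-t) * x ^ q)
      MeasureTheory.volume a η := by
    refine hf.mono_set ?_
    rw [Set.uIcc_of_le hη.le, Set.uIcc_of_le haη]
    exact Set.Icc_subset_Icc ha0.le le_rfl
  have hg1 : IntervalIntegrable (fun x : ℝ => Real.exp (-1) * x ^ q)
      MeasureTheory.volume 0 a :=
    (intervalIntegral.intervalIntegrable_rpow' hq).const_mul _
  -- split integral
  have hsplit : (∫ r in (0:ℝ)..a, (1 + r ^ (2 - 2*θ)) ^ (-t) * r ^ q)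
      + (∫ r in a..η, (1 + r ^ (2 - 2*θ)) ^ (-t) * r ^ q)
      = ∫ r in (0:ℝ)..η, (1 + r ^ (2 - 2*θ)) ^ (-t) * r ^ q :=
    intervalIntegral.integral_add_adjacent_intervals hf1 hf2
  have htail : 0 ≤ ∫ r in a..η, (1 + r ^ (2 - 2*θ)) ^ (-t) * r ^ q := by
    refine intervalIntegral.integral_nonneg haη ?_
    intro u hu
    have hu0 : (0:ℝ) ≤ u := le_trans ha0.le hu.1
    have h1 : (0:ℝ) ≤ u ^ (2-2*θ) := Real.rpow_nonneg hu0 _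
    have := Real.rpow_nonneg (show (0:ℝ) ≤ 1 + u ^ (2-2*θ) by linarith) (-t)
    have := Real.rpow_nonneg hu0 q
    positivity
  have hmono : (∫ r in (0:ℝ)..a, Real.exp (-1) * r ^ q)
      ≤ ∫ r in (0:ℝ)..a, (1 + r ^ (2 - 2*θ)) ^ (-t) * r ^ q :=
    intervalIntegral.integral_mono_on ha0.le hg1 hf1 hpt
  have hcomp : (∫ r in (0:ℝ)..a, Real.exp (-1) * r ^ q)
      = Real.exp (-1) / (q+1) * t ^ (-(q+1)/(2*(1-θ))) := by
    rw [intervalIntegral.integral_const_mul, integral_rpow (Or.inl hq)]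
    rw [Real.zero_rpow (by linarith : q + 1 ≠ 0)]
    have : a ^ (q+1) = t ^ (-(q+1)/(2*(1-θ))) := by
      rw [ha, ← Real.rpow_mul ht0.le]
      congr 1
      rw [show (2:ℝ)*(1-θ) = 2-2*θ by ring]
      have h2 : (2:ℝ)-2*θ ≠ 0 := hθ2.ne'
      field_simp
    rw [this]
    ring
  linarith [hsplit, htail, hmono, hcomp ▸ hmono]
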